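/- On S^d, for every N: if N is even, the maximal sum of pairwise geodesic distances satisfies θ_N = sup_{D_N} Σ_{x_i,x_j ∈ D_N} θ(x_i,x_j) = (π/2)N², attained by any antipodally symmetric configuration; if N is odd, θ_N ≥ (π/2)N² − π² (in particular (π/2)N² − θ_N ≤ π² for odd N ≥ 1, achieved by adding one point to an antipodal configuration). -/

import Mathlib

open Real

noncomputable section

/-- Geodesic distance on the unit sphere. -/
def geoDist {d : ℕ} (x y : Metric.sphere (0 : EuclideanSpace ℝ (Fin (d + 1))) 1) : ℝ :=
  arccos (inner ℝ (x : EuclideanSpace ℝ (Fin (d + 1))) (y : EuclideanSpace ℝ (Fin (d + 1))) : ℝ)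

namespace SGDaux


def dd (k : ℕ) : ℝ := (Nat.centralBinom k : ℝ) / 4 ^ k
def cc (k : ℕ) : ℝ := dd k / (2 * k + 1)

lemma dd_nonneg (k : ℕ) : 0 ≤ dd k := by unfold dd; positivity
lemma cc_nonneg (k : ℕ) : 0 ≤ cc k := by
  unfold cc; exact div_nonneg (dd_nonneg k) (by positivity)

lemma dd_le_one (k : ℕ) : dd k ≤ 1 := by
  rw [dd, div_le_one (by positivity)]
  have h1 : Nat.centralBinom k ≤ 4 ^ k := by
    calc Nat.centralBinom k = (2*k).choose k := Nat.centralBinom_eq_two_mul_choose k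
    _ ≤ (2*k+1).choose k := Nat.choose_le_choose k (by omega)
    _ ≤ 4 ^ k := Nat.choose_middle_le_pow k
  exact_mod_cast h1

lemma cc_mul (k : ℕ) : cc k * (2 * (k:ℝ) + 1) = dd k := by
  rw [cc]; field_simp

lemma dd_rec (k : ℕ) : (2 * (k:ℝ) + 2) * dd (k+1) = (2 * k + 1) * dd k := by
  have h := Nat.succ_mul_centralBinom_succ k
  have h' : ((k:ℝ)+1) * (Nat.centralBinom (k+1) : ℝ)
      = 2 * (2*(k:ℝ)+1) * (Nat.centralBinom k : ℝ) := by exact_mod_cast h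
  rw [dd, dd]
  have h4 : (4:ℝ) ^ k ≠ 0 := by positivity
  field_simp
  rw [pow_succ]
  nlinarith [h', pow_pos (show (0:ℝ) < 4 by norm_num) k]

lemma summable_aux {s : ℝ} (h0 : 0 ≤ s) (h1 : s < 1) :
    Summable (fun k : ℕ => (2 * (k:ℝ) + 4) * s ^ k) := by
  have h : ‖s‖ < 1 := by rwa [Real.norm_eq_abs, abs_of_nonneg h0]
  have t1 := summable_pow_mul_geometric_of_norm_lt_one (R := ℝ) 1 h
  have t2 : Summable (fun k : ℕ => s ^ k) := summable_geometric_of_lt_one h0 h1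
  have := (t1.mul_left 2).add (t2.mul_left 4)
  refine this.congr (fun k => ?_)
  ring


def gg (t : ℝ) : ℝ := ∑' k : ℕ, cc k * t ^ (2*k+1)
def uu (t : ℝ) : ℝ := ∑' k : ℕ, dd k * t ^ (2*k)
def up (t : ℝ) : ℝ := ∑' k : ℕ, 2 * (k:ℝ) * dd k * t ^ (2*k-1)

-- generic bounds
lemma bound_u {t r : ℝ} (h : |t| ≤ r) (hr : r ≤ 1) (k : ℕ) :
    ‖dd k * t ^ (2*k)‖ ≤ (2 * (k:ℝ) + 4) * r ^ k := by
  have h0 : (0:ℝ) ≤ r := le_trans (abs_nonneg t) h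
  have hp : |t| ^ (2*k) ≤ r ^ k := by
    calc |t| ^ (2*k) ≤ r ^ (2*k) := pow_le_pow_left₀ (abs_nonneg t) h _
    _ ≤ r ^ k := pow_le_pow_of_le_one h0 hr (by omega)
  rw [norm_mul, norm_pow, Real.norm_eq_abs, Real.norm_eq_abs,
    abs_of_nonneg (dd_nonneg k)]
  have := dd_le_one k
  nlinarith [pow_nonneg (abs_nonneg t) (2*k), pow_nonneg h0 k, dd_nonneg k]

lemma bound_up {t r : ℝ} (h : |t| ≤ r) (hr : r ≤ 1) (k : ℕ) :
    ‖2 * (k:ℝ) * dd k * t ^ (2*k-1)‖ ≤ (2 * (k:ℝ) + 4) * r ^ k := by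
  have h0 : (0:ℝ) ≤ r := le_trans (abs_nonneg t) h
  rcases Nat.eq_zero_or_pos k with rfl | hk
  · simp
  have hp : |t| ^ (2*k-1) ≤ r ^ k := by
    calc |t| ^ (2*k-1) ≤ r ^ (2*k-1) := pow_le_pow_left₀ (abs_nonneg t) h _
    _ ≤ r ^ k := pow_le_pow_of_le_one h0 hr (by omega)
  rw [norm_mul, norm_pow, Real.norm_eq_abs, Real.norm_eq_abs,
    abs_of_nonneg (mul_nonneg (by positivity) (dd_nonneg k))]
  have hk' : (1:ℝ) ≤ (k:ℝ) := by exact_mod_cast hk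
  have e1 : dd k * |t| ^ (2*k-1) ≤ 1 * r ^ k :=
    mul_le_mul (dd_le_one k) hp (pow_nonneg (abs_nonneg t) _) zero_le_one
  have e2 : 2*(k:ℝ) * (dd k * |t|^(2*k-1)) ≤ 2*(k:ℝ) * (1 * r^k) :=
    mul_le_mul_of_nonneg_left e1 (by positivity)
  nlinarith [pow_nonneg h0 k]

lemma bound_g {t r : ℝ} (h : |t| ≤ r) (hr : r ≤ 1) (k : ℕ) :
    ‖cc k * t ^ (2*k+1)‖ ≤ (2 * (k:ℝ) + 4) * r ^ k := by
  have h0 : (0:ℝ) ≤ r := le_trans (abs_nonneg t) h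
  have hp : |t| ^ (2*k+1) ≤ r ^ k := by
    calc |t| ^ (2*k+1) ≤ r ^ (2*k+1) := pow_le_pow_left₀ (abs_nonneg t) h _
    _ ≤ r ^ k := pow_le_pow_of_le_one h0 hr (by omega)
  have hc : cc k ≤ 1 := by
    have := cc_mul k
    have h1 : (0:ℝ) < 2*(k:ℝ)+1 := by positivity
    nlinarith [cc_nonneg k, dd_le_one k]
  rw [norm_mul, norm_pow, Real.norm_eq_abs, Real.norm_eq_abs,
    abs_of_nonneg (cc_nonneg k)]
  nlinarith [pow_nonneg (abs_nonneg t) (2*k+1), pow_nonneg h0 k, cc_nonneg k]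

lemma summable_of_bound {f : ℕ → ℝ} {r : ℝ} (hr0 : 0 ≤ r) (hr1 : r < 1)
    (hb : ∀ k, ‖f k‖ ≤ (2 * (k:ℝ) + 4) * r ^ k) : Summable f :=
  Summable.of_norm_bounded (summable_aux hr0 hr1) hb

lemma hasDerivAt_uu {r : ℝ} (hr0 : 0 < r) (hr1 : r < 1) {t : ℝ} (ht : t ∈ Set.Ioo (-r) r) :
    HasDerivAt uu (up t) t := by
  have hio : ∀ y ∈ Set.Ioo (-r) r, |y| ≤ r := fun y hy => by
    rw [abs_le]; exact ⟨hy.1.le, hy.2.le⟩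
  have H := hasDerivAt_tsum_of_isPreconnected
    (g := fun (k : ℕ) (y : ℝ) => dd k * y ^ (2*k))
    (g' := fun (k : ℕ) (y : ℝ) => 2 * (k:ℝ) * dd k * y ^ (2*k-1))
    (u := fun k : ℕ => (2 * (k:ℝ) + 4) * r ^ k)
    (summable_aux hr0.le hr1) isOpen_Ioo (convex_Ioo _ _).isPreconnected
    (fun k y _ => by
      have := (hasDerivAt_pow (2*k) y).const_mul (dd k)
      refine this.congr_deriv (Eq.symm ?_)
      push_cast
      ring)
    (fun k y hy => bound_up (hio y hy) hr1.le k)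
    (Set.mem_Ioo.mpr ⟨by linarith, hr0⟩)
    (by
      apply summable_of_ne_finset_zero (s := {0})
      intro k hk
      simp only [Finset.mem_singleton] at hk
      show dd k * (0:ℝ) ^ (2*k) = 0
      rw [zero_pow (by omega : 2*k ≠ 0), mul_zero])
    ht
  exact H

lemma hasDerivAt_gg {r : ℝ} (hr0 : 0 < r) (hr1 : r < 1) {t : ℝ} (ht : t ∈ Set.Ioo (-r) r) :
    HasDerivAt gg (uu t) t := by
  have hio : ∀ y ∈ Set.Ioo (-r) r, |y| ≤ r := fun y hy => by
    rw [abs_le]; exact ⟨hy.1.le, hy.2.le⟩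
  have H := hasDerivAt_tsum_of_isPreconnected
    (g := fun (k : ℕ) (y : ℝ) => cc k * y ^ (2*k+1))
    (g' := fun (k : ℕ) (y : ℝ) => dd k * y ^ (2*k))
    (u := fun k : ℕ => (2 * (k:ℝ) + 4) * r ^ k)
    (summable_aux hr0.le hr1) isOpen_Ioo (convex_Ioo _ _).isPreconnected
    (fun k y _ => by
      have h := (hasDerivAt_pow (2*k+1) y).const_mul (cc k)
      have he : 2*k+1-1 = 2*k := by omega
      rw [he] at h
      refine h.congr_deriv (Eq.symm ?_)
      show dd k * y ^ (2*k) = cc k * (((2*k+1 : ℕ) : ℝ) * y ^ (2*k))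
      rw [← cc_mul k]
      push_cast
      ring)
    (fun k y hy => bound_u (hio y hy) hr1.le k)
    (Set.mem_Ioo.mpr ⟨by linarith, hr0⟩)
    (by
      apply summable_of_ne_finset_zero (s := ∅)
      intro k _
      show cc k * (0:ℝ) ^ (2*k+1) = 0
      rw [zero_pow (by omega : 2*k+1 ≠ 0), mul_zero])
    ht
  exact H

lemma ode {t : ℝ} (ht : |t| < 1) : up t * (1 - t^2) = t * uu t := by
  have h0 : (0:ℝ) ≤ |t| := abs_nonneg t
  have S1 : Summable (fun k : ℕ => 2 * (k:ℝ) * dd k * t ^ (2*k-1)) :=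
    summable_of_bound h0 ht (fun k => bound_up le_rfl ht.le k)
  have S2 : Summable (fun k : ℕ => 2 * (k:ℝ) * dd k * t ^ (2*k+1)) := by
    apply summable_of_bound h0 ht
    intro k
    have h1 : ‖t ^ (2*k+1)‖ ≤ ‖t ^ (2*k-1)‖ := by
      rw [norm_pow, norm_pow, Real.norm_eq_abs]
      exact pow_le_pow_of_le_one h0 ht.le (by omega)
    calc ‖2 * (k:ℝ) * dd k * t ^ (2*k+1)‖
        ≤ ‖2 * (k:ℝ) * dd k * t ^ (2*k-1)‖ := by
          simp only [norm_mul]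
          exact mul_le_mul_of_nonneg_left h1 (by positivity)
      _ ≤ _ := bound_up le_rfl ht.le k
  have S3 : Summable (fun k : ℕ => dd k * t ^ (2*k+1)) := by
    apply summable_of_bound h0 ht
    intro k
    have h1 : ‖t ^ (2*k+1)‖ ≤ ‖t ^ (2*k)‖ := by
      rw [norm_pow, norm_pow, Real.norm_eq_abs]
      exact pow_le_pow_of_le_one h0 ht.le (by omega)
    calc ‖dd k * t ^ (2*k+1)‖ ≤ ‖dd k * t ^ (2*k)‖ := by
          simp only [norm_mul]
          exact mul_le_mul_of_nonneg_left h1 (by positivity)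
      _ ≤ _ := bound_u le_rfl ht.le k
  have e1 : up t = ∑' k : ℕ, (2 * (k:ℝ) + 1) * dd k * t ^ (2*k+1) := by
    rw [up, Summable.tsum_eq_zero_add S1]
    simp only [Nat.cast_zero, mul_zero, zero_mul, zero_add, Nat.cast_one]
    apply tsum_congr
    intro k
    have he : 2*(k+1)-1 = 2*k+1 := by omega
    rw [he, ← dd_rec k]
    push_cast
    ring
  have e2 : (∑' k : ℕ, (2 * (k:ℝ) + 1) * dd k * t ^ (2*k+1))
      = (∑' k : ℕ, 2 * (k:ℝ) * dd k * t ^ (2*k+1)) + ∑' k : ℕ, dd k * t ^ (2*k+1) := by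
    refine (tsum_congr fun k => ?_).trans (Summable.tsum_add S2 S3)
    ring
  have e3 : (∑' k : ℕ, 2 * (k:ℝ) * dd k * t ^ (2*k+1)) = t^2 * up t := by
    rw [up, ← tsum_mul_left]
    apply tsum_congr
    intro k
    rcases Nat.eq_zero_or_pos k with rfl | hk
    · simp
    · have he : 2*k-1+2 = 2*k+1 := by omega
      rw [show t^2 * (2 * (k:ℝ) * dd k * t ^ (2*k-1)) = 2 * (k:ℝ) * dd k * (t^(2*k-1) * t^2) by ring,
        ← pow_add, he]
  have e4 : (∑' k : ℕ, dd k * t ^ (2*k+1)) = t * uu t := by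
    rw [uu, ← tsum_mul_left]
    apply tsum_congr
    intro k
    rw [show t * (dd k * t ^ (2*k)) = dd k * (t^(2*k) * t) by ring, ← pow_succ]
  have key : up t = t^2 * up t + t * uu t := by
    calc up t = _ := e1
    _ = _ := e2
    _ = t^2 * up t + t * uu t := by rw [e3, e4]
  linear_combination key

lemma uu_zero : uu 0 = 1 := by
  rw [uu, tsum_eq_single 0 (fun k hk => by
    rw [zero_pow (by omega : 2*k ≠ 0), mul_zero])]
  simp [dd, Nat.centralBinom_zero]

lemma gg_zero : gg 0 = 0 := by
  rw [gg, tsum_eq_single 0 (fun k hk => by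
    rw [zero_pow (by omega : 2*k+1 ≠ 0), mul_zero])]
  norm_num

lemma hasDerivAt_w {x : ℝ} (hx : |x| < 1) :
    HasDerivAt (fun y => uu y * Real.sqrt (1 - y^2)) 0 x := by
  set r := (|x| + 1) / 2 with hr
  have hr0 : 0 < r := by positivity
  have hr1 : r < 1 := by rw [hr]; linarith
  have hxr : x ∈ Set.Ioo (-r) r := by
    constructor
    · have := neg_abs_le x; rw [hr]; linarith [abs_nonneg x]
    · have := le_abs_self x; rw [hr]; linarith
  have hu := hasDerivAt_uu hr0 hr1 hxr
  have hx2 : (0:ℝ) < 1 - x^2 := by nlinarith [sq_abs x, abs_nonneg x]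
  have hs0 : Real.sqrt (1 - x^2) > 0 := Real.sqrt_pos.mpr hx2
  have hpoly : HasDerivAt (fun y : ℝ => 1 - y^2) (-(2*x)) x := by
    have := (hasDerivAt_pow 2 x).const_sub 1
    refine this.congr_deriv (Eq.symm ?_)
    push_cast
    ring
  have hsq : HasDerivAt (fun y : ℝ => Real.sqrt (1 - y^2))
      (-(2*x) / (2 * Real.sqrt (1 - x^2))) x :=
    (Real.hasDerivAt_sqrt hx2.ne').comp x hpoly |>.congr_deriv (by ring)
  have := hu.mul hsq
  refine this.congr_deriv (Eq.symm ?_)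
  have hode := ode hx
  have hss : Real.sqrt (1 - x^2) * Real.sqrt (1 - x^2) = 1 - x^2 :=
    Real.mul_self_sqrt hx2.le
  field_simp
  linear_combination (-1) * hode + (-1 * up x) * hss

lemma uu_sqrt {t : ℝ} (ht : |t| < 1) : uu t * Real.sqrt (1 - t^2) = 1 := by
  set w := fun y : ℝ => uu y * Real.sqrt (1 - y^2) with hw
  have hmem : ∀ x a b : ℝ, x ∈ Set.Icc a b → |a| < 1 → |b| < 1 → |x| < 1 := by
    intro x a b hx ha hb
    rw [abs_lt] at *
    exact ⟨by linarith [hx.1], by linarith [hx.2]⟩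
  have hw0 : w 0 = 1 := by
    rw [hw]; simp [uu_zero]
  rcases le_or_gt 0 t with h | h
  · have := constant_of_has_deriv_right_zero (f := w) (a := 0) (b := t)
      (fun x hx => ((hasDerivAt_w (hmem x 0 t hx (by simp) ht)).continuousAt).continuousWithinAt)
      (fun x hx => (hasDerivAt_w (hmem x 0 t ⟨hx.1, hx.2.le⟩ (by simp) ht)).hasDerivWithinAt)
      t (Set.mem_Icc.mpr ⟨h, le_refl t⟩)
    exact this.trans hw0
  · have := constant_of_has_deriv_right_zero (f := w) (a := t) (b := 0)
      (fun x hx => ((hasDerivAt_w (hmem x t 0 hx ht (by simp))).continuousAt).continuousWithinAt)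
      (fun x hx => (hasDerivAt_w (hmem x t 0 ⟨hx.1, hx.2.le⟩ ht (by simp))).hasDerivWithinAt)
      0 (Set.mem_Icc.mpr ⟨h.le, le_refl 0⟩)
    exact this.symm.trans hw0

lemma uu_eq {t : ℝ} (ht : |t| < 1) : uu t = 1 / Real.sqrt (1 - t^2) := by
  have hx2 : (0:ℝ) < 1 - t^2 := by nlinarith [sq_abs t, abs_nonneg t]
  have hs0 : Real.sqrt (1 - t^2) > 0 := Real.sqrt_pos.mpr hx2
  field_simp
  exact uu_sqrt ht

lemma gg_eq_arcsin {t : ℝ} (ht : |t| < 1) : gg t = arcsin t := by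
  have main : ∀ s : ℝ, 0 ≤ s → s < 1 → gg s = arcsin s := by
    intro s h0 h1
    have hmem : ∀ x : ℝ, x ∈ Set.Icc 0 s → |x| < 1 := by
      intro x hx
      rw [abs_lt]
      exact ⟨by linarith [hx.1], by linarith [hx.2]⟩
    have harc : ∀ x ∈ Set.Ico (0:ℝ) s, HasDerivWithinAt arcsin (uu x) (Set.Ici x) x := by
      intro x hx
      have hax : |x| < 1 := hmem x ⟨hx.1, hx.2.le⟩
      rw [abs_lt] at hax
      have := Real.hasDerivAt_arcsin (by linarith) (by linarith)
      rw [← uu_eq (by rw [abs_lt]; exact hax)] at this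
      exact this.hasDerivWithinAt
    have hggd : ∀ x : ℝ, |x| < 1 → HasDerivAt gg (uu x) x := by
      intro x hax
      set r := (|x| + 1) / 2 with hr
      refine hasDerivAt_gg (r := r) (by positivity) (by rw [hr]; linarith) ?_
      constructor
      · have := neg_abs_le x; rw [hr]; linarith [abs_nonneg x]
      · have := le_abs_self x; rw [hr]; linarith
    have := eq_of_has_deriv_right_eq (f := gg) (g := arcsin) (f' := uu) (a := 0) (b := s)
      (fun x hx => (hggd x (hmem x ⟨hx.1, hx.2.le⟩)).hasDerivWithinAt)
      harc
      (fun x hx => (hggd x (hmem x hx)).continuousAt.continuousWithinAt)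
      (Real.continuous_arcsin.continuousOn)
      (by rw [gg_zero, Real.arcsin_zero])
    exact this s (Set.mem_Icc.mpr ⟨h0, le_refl s⟩)
  rcases le_or_gt 0 t with h | h
  · exact main t h (by rw [abs_of_nonneg h] at ht; exact ht)
  · have h1 : gg (-t) = arcsin (-t) := by
      apply main (-t) (by linarith)
      rw [abs_of_neg h] at ht; linarith
    have hodd : gg (-t) = - gg t := by
      rw [gg, gg, ← tsum_neg]
      apply tsum_congr
      intro k
      rw [Odd.neg_pow ⟨k, by ring⟩]
      ring
    rw [hodd, Real.arcsin_neg] at h1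
    linarith

lemma summable_gg {t : ℝ} (ht : |t| < 1) : Summable (fun k : ℕ => cc k * t ^ (2*k+1)) :=
  summable_of_bound (abs_nonneg t) ht (fun k => bound_g le_rfl ht.le k)

lemma partial_le : ∀ K : ℕ, ∑ k ∈ Finset.range K, cc k ≤ π / 2 := by
  intro K
  set φ : ℝ → ℝ := fun t => ∑ k ∈ Finset.range K, cc k * t ^ (2*k+1) with hφ
  have key : ∀ t : ℝ, 0 < t → t < 1 → φ t ≤ π / 2 := by
    intro t h0 h1
    have habs : |t| < 1 := by rw [abs_of_pos h0]; exact h1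
    have hle : φ t ≤ gg t := by
      apply Summable.sum_le_tsum (Finset.range K) _ (summable_gg habs)
      intro k _
      exact mul_nonneg (cc_nonneg k) (pow_nonneg h0.le _)
    rw [gg_eq_arcsin habs] at hle
    exact le_trans hle (Real.arcsin_le_pi_div_two t)
  have hcont : ContinuousAt φ 1 := by
    apply Continuous.continuousAt
    apply continuous_finset_sum
    intro k _
    continuity
  have htend : Filter.Tendsto φ (nhdsWithin 1 (Set.Iio 1)) (nhds (φ 1)) :=
    hcont.continuousWithinAt.tendsto
  have hev : ∀ᶠ x in nhdsWithin 1 (Set.Iio 1), φ x ≤ π / 2 := by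
    filter_upwards [Ioo_mem_nhdsLT_of_mem (show (1:ℝ) ∈ Set.Ioc 0 1 by constructor <;> norm_num)]
    intro x hx
    exact key x hx.1 hx.2
  have := le_of_tendsto htend hev
  calc ∑ k ∈ Finset.range K, cc k = φ 1 := by
        rw [hφ]
        apply Finset.sum_congr rfl
        intro k _
        rw [one_pow, mul_one]
    _ ≤ π / 2 := this

lemma summable_cc : Summable cc := summable_of_sum_range_le cc_nonneg partial_le

lemma tsum_cc : ∑' k, cc k = π / 2 := by
  have h1 : ∑' k, cc k ≤ π / 2 := Real.tsum_le_of_sum_range_le cc_nonneg partial_le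
  have h2 : π / 2 ≤ ∑' k, cc k := by
    have key : ∀ t : ℝ, 0 < t → t < 1 → arcsin t ≤ ∑' k, cc k := by
      intro t h0 h1'
      have habs : |t| < 1 := by rw [abs_of_pos h0]; exact h1'
      rw [← gg_eq_arcsin habs, gg]
      apply Summable.tsum_le_tsum _ (summable_gg habs) summable_cc
      intro k
      have : t ^ (2*k+1) ≤ 1 := pow_le_one₀ h0.le h1'.le
      nlinarith [cc_nonneg k, pow_pos h0 (2*k+1)]
    have htend : Filter.Tendsto arcsin (nhdsWithin 1 (Set.Iio 1)) (nhds (π/2)) := by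
      have : Filter.Tendsto arcsin (nhds 1) (nhds (arcsin 1)) :=
        Real.continuous_arcsin.continuousAt
      rw [Real.arcsin_one] at this
      exact this.mono_left nhdsWithin_le_nhds
    apply le_of_tendsto htend
    filter_upwards [Ioo_mem_nhdsLT_of_mem (show (1:ℝ) ∈ Set.Ioc 0 1 by constructor <;> norm_num)]
    intro x hx
    exact key x hx.1 hx.2
  linarith

lemma hasSum_arcsin {t : ℝ} (ht : |t| ≤ 1) :
    HasSum (fun k : ℕ => cc k * t ^ (2*k+1)) (arcsin t) := by
  rcases lt_or_eq_of_le ht with h | h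
  · have := (summable_gg h).hasSum
    rwa [show (∑' k : ℕ, cc k * t ^ (2*k+1)) = arcsin t from (gg_eq_arcsin h)] at this
  · rcases abs_eq (by norm_num : (0:ℝ) ≤ 1) |>.mp h with rfl | rfl
    · have := summable_cc.hasSum
      rw [tsum_cc] at this
      rw [Real.arcsin_one]
      convert this using 2 with k
      rw [one_pow, mul_one]
    · have := summable_cc.hasSum.neg
      rw [tsum_cc] at this
      rw [Real.arcsin_neg, Real.arcsin_one]
      rw [show (fun k : ℕ => cc k * (-1:ℝ) ^ (2*k+1)) = fun k => -cc k from
        funext fun k => by rw [Odd.neg_pow ⟨k, by ring⟩, one_pow]; ring]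
      exact this

lemma inner_pow_sum_nonneg {n : ℕ} {ι : Type*} [Fintype ι]
    (x : ι → EuclideanSpace ℝ (Fin n)) (m : ℕ) :
    0 ≤ ∑ i, ∑ j, (inner ℝ (x i) (x j) : ℝ) ^ m := by
  set P : ι → (Fin m → Fin n) → ℝ := fun i p => ∏ r, x i (p r) with hP
  have key : ∀ i j, (inner ℝ (x i) (x j) : ℝ) ^ m = ∑ p : Fin m → Fin n, P i p * P j p := by
    intro i j
    have hinner : (inner ℝ (x i) (x j) : ℝ) = ∑ a, x i a * x j a := by
      simp [PiLp.inner_apply, RCLike.inner_apply, conj_trivial, mul_comm]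
    rw [hinner, Finset.sum_pow' Finset.univ (fun a => x i a * x j a) m]
    rw [Fintype.piFinset_univ]
    apply Finset.sum_congr rfl
    intro p _
    rw [hP, ← Finset.prod_mul_distrib]
  calc ∑ i, ∑ j, (inner ℝ (x i) (x j) : ℝ) ^ m
      = ∑ i, ∑ j, ∑ p : Fin m → Fin n, P i p * P j p := by
        apply Finset.sum_congr rfl; intro i _
        apply Finset.sum_congr rfl; intro j _
        exact key i j
    _ = ∑ i, ∑ p : Fin m → Fin n, ∑ j, P i p * P j p := by
        apply Finset.sum_congr rfl; intro i _
        exact Finset.sum_comm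
    _ = ∑ p : Fin m → Fin n, ∑ i, ∑ j, P i p * P j p := Finset.sum_comm
    _ = ∑ p : Fin m → Fin n, (∑ i, P i p) * (∑ j, P j p) := by
        apply Finset.sum_congr rfl; intro p _
        rw [Finset.sum_mul]
        apply Finset.sum_congr rfl; intro i _
        rw [Finset.mul_sum]
    _ ≥ 0 := Finset.sum_nonneg (fun p _ => mul_self_nonneg _)

lemma arcsin_sum_nonneg {n : ℕ} {ι : Type*} [Fintype ι]
    (x : ι → EuclideanSpace ℝ (Fin n)) (hx : ∀ i, ‖x i‖ = 1) :
    0 ≤ ∑ i, ∑ j, arcsin (inner ℝ (x i) (x j) : ℝ) := by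
  have habs : ∀ i j, |(inner ℝ (x i) (x j) : ℝ)| ≤ 1 := by
    intro i j
    calc |(inner ℝ (x i) (x j) : ℝ)| ≤ ‖x i‖ * ‖x j‖ := abs_real_inner_le_norm _ _
      _ = 1 := by rw [hx i, hx j, mul_one]
  have H : HasSum (fun k : ℕ => ∑ i, ∑ j, cc k * (inner ℝ (x i) (x j) : ℝ) ^ (2*k+1))
      (∑ i, ∑ j, arcsin (inner ℝ (x i) (x j) : ℝ)) := by
    apply hasSum_sum
    intro i _
    apply hasSum_sum
    intro j _
    exact hasSum_arcsin (habs i j)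
  refine hasSum_le (fun k => ?_) hasSum_zero H
  have : ∑ i, ∑ j, cc k * (inner ℝ (x i) (x j) : ℝ) ^ (2*k+1)
      = cc k * ∑ i, ∑ j, (inner ℝ (x i) (x j) : ℝ) ^ (2*k+1) := by
    rw [Finset.mul_sum]
    apply Finset.sum_congr rfl; intro i _
    rw [Finset.mul_sum]
  rw [this]
  exact mul_nonneg (cc_nonneg k) (inner_pow_sum_nonneg x (2*k+1))




lemma gd_neg_right {d : ℕ} (x y : Metric.sphere (0 : EuclideanSpace ℝ (Fin (d + 1))) 1) :
    geoDist x (-y) = π - geoDist x y := by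
  rw [geoDist, geoDist, coe_neg_sphere, inner_neg_right]
  exact Real.arccos_neg _

lemma gd_neg_left {d : ℕ} (x y : Metric.sphere (0 : EuclideanSpace ℝ (Fin (d + 1))) 1) :
    geoDist (-x) y = π - geoDist x y := by
  rw [geoDist, geoDist, coe_neg_sphere, inner_neg_left]
  exact Real.arccos_neg _

lemma part1 {d N : ℕ} (D : Fin N → Metric.sphere (0 : EuclideanSpace ℝ (Fin (d + 1))) 1) :
    ∑ i, ∑ j, geoDist (D i) (D j) ≤ (π / 2) * (N : ℝ) ^ 2 := by
  have hnorm : ∀ i, ‖((D i : EuclideanSpace ℝ (Fin (d+1))))‖ = 1 := fun i =>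
    norm_eq_of_mem_sphere (D i)
  have hpos : 0 ≤ ∑ i, ∑ j, arcsin (inner ℝ (D i : EuclideanSpace ℝ (Fin (d+1))) (D j : EuclideanSpace ℝ (Fin (d+1))) : ℝ) := by
    simpa using arcsin_sum_nonneg (fun i => (D i : EuclideanSpace ℝ (Fin (d+1)))) hnorm
  have he : ∑ i, ∑ j, geoDist (D i) (D j)
      = ∑ i, ∑ j, (π/2 - arcsin (inner ℝ (D i : EuclideanSpace ℝ (Fin (d+1))) (D j : EuclideanSpace ℝ (Fin (d+1))) : ℝ)) := by
    apply Finset.sum_congr rfl; intro i _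
    apply Finset.sum_congr rfl; intro j _
    rw [geoDist, Real.arccos_eq_pi_div_two_sub_arcsin]
  rw [he]
  simp only [Finset.sum_sub_distrib, Finset.sum_const, Finset.card_univ, Fintype.card_fin,
    nsmul_eq_mul]
  have hring : (N:ℝ) * ((N:ℝ) * (π/2)) = π/2 * (N:ℝ)^2 := by ring
  linarith

lemma part2 {d : ℕ} (a : ℕ) (E : Fin a → Metric.sphere (0 : EuclideanSpace ℝ (Fin (d + 1))) 1) :
    (∑ i : Fin a ⊕ Fin a, ∑ j : Fin a ⊕ Fin a,
        geoDist (Sum.elim E (fun k => -E k) i) (Sum.elim E (fun k => -E k) j))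
      = (π / 2) * ((2 * a : ℕ) : ℝ) ^ 2 := by
  simp only [Fintype.sum_sum_type, Sum.elim_inl, Sum.elim_inr, gd_neg_right, gd_neg_left,
    Finset.sum_sub_distrib, Finset.sum_add_distrib, Finset.sum_const, Finset.card_univ,
    Fintype.card_fin, Fintype.card_sum, nsmul_eq_mul]
  push_cast
  ring

lemma count_sum {N a : ℕ} (ha : a ≤ N) (c1 c2 : ℝ) :
    ∑ j : Fin N, (if (j:ℕ) < a then c1 else c2) = (a:ℝ) * c1 + ((N:ℝ) - a) * c2 := by
  rw [Fin.sum_univ_eq_sum_range (fun j => if j < a then c1 else c2) N, Finset.sum_ite]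
  have h1 : (Finset.range N).filter (fun j => j < a) = Finset.range a := by
    ext j; simp only [Finset.mem_filter, Finset.mem_range]; omega
  have h2 : (Finset.range N).filter (fun j => ¬ j < a) = Finset.Ico a N := by
    ext j; simp only [Finset.mem_filter, Finset.mem_range, Finset.mem_Ico]; omega
  rw [h1, h2, Finset.sum_const, Finset.sum_const, Finset.card_range, Nat.card_Ico,
    nsmul_eq_mul, nsmul_eq_mul, Nat.cast_sub ha]

lemma part3 {d N : ℕ} (h : Odd N) :
    ∃ D : Fin N → Metric.sphere (0 : EuclideanSpace ℝ (Fin (d + 1))) 1,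
      (π / 2) * (N : ℝ) ^ 2 - π ^ 2 ≤ ∑ i, ∑ j, geoDist (D i) (D j) := by
  obtain ⟨a, ha⟩ := h
  have hmem : EuclideanSpace.single (0 : Fin (d+1)) (1:ℝ) ∈
      Metric.sphere (0 : EuclideanSpace ℝ (Fin (d + 1))) 1 := by
    rw [mem_sphere_zero_iff_norm, EuclideanSpace.norm_single, norm_one]
  set p : Metric.sphere (0 : EuclideanSpace ℝ (Fin (d + 1))) 1 := ⟨_, hmem⟩ with hp
  have gdpp : geoDist p p = 0 := by
    rw [geoDist, real_inner_self_eq_norm_sq, norm_eq_of_mem_sphere, one_pow, Real.arccos_one]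
  have gdpn : geoDist p (-p) = π := by rw [gd_neg_right, gdpp, sub_zero]
  have gdnp : geoDist (-p) p = π := by rw [gd_neg_left, gdpp, sub_zero]
  have gdnn : geoDist (-p) (-p) = 0 := by rw [gd_neg_right, gdnp, sub_self]
  refine ⟨fun i => if (i:ℕ) < a then -p else p, ?_⟩
  have haN : a ≤ N := by omega
  have hgd : ∀ i j : Fin N, geoDist (if (i:ℕ) < a then -p else p) (if (j:ℕ) < a then -p else p)
      = if (j:ℕ) < a then (if (i:ℕ) < a then (0:ℝ) else π) else (if (i:ℕ) < a then π else 0) := by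
    intro i j
    split_ifs <;> simp [gdpp, gdpn, gdnp, gdnn]
  have hrow : ∀ i : Fin N, (∑ j : Fin N, geoDist (if (i:ℕ) < a then -p else p) (if (j:ℕ) < a then -p else p))
      = if (i:ℕ) < a then ((N:ℝ) - a) * π else (a:ℝ) * π := by
    intro i
    have := count_sum (N := N) haN (if (i:ℕ) < a then (0:ℝ) else π) (if (i:ℕ) < a then π else 0)
    rw [Finset.sum_congr rfl (fun j _ => hgd i j), this]
    split_ifs <;> ring
  rw [Finset.sum_congr rfl (fun i _ => hrow i), count_sum haN]
  have hc : (N:ℝ) = 2*(a:ℝ)+1 := by rw [ha]; push_cast; ring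
  rw [hc]
  nlinarith [pi_gt_three]


end SGDaux

/-- On `S^d`: the sum of pairwise geodesic distances of any `N`-point configuration
is at most `(π/2)N²`; if `N = 2a` is even this bound is attained by every
antipodally symmetric configuration (hence `θ_N = (π/2)N²`); and if `N` is odd there
is a configuration with sum at least `(π/2)N² − π²` (so `(π/2)N² − θ_N ≤ π²`). -/
theorem sum_geodesic_distances_sphere (d N : ℕ) :
    (∀ D : Fin N → Metric.sphere (0 : EuclideanSpace ℝ (Fin (d + 1))) 1,
      ∑ i, ∑ j, geoDist (D i) (D j) ≤ (π / 2) * (N : ℝ) ^ 2) ∧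
    (∀ a : ℕ, N = 2 * a →
      ∀ E : Fin a → Metric.sphere (0 : EuclideanSpace ℝ (Fin (d + 1))) 1,
        (∑ i : Fin a ⊕ Fin a, ∑ j : Fin a ⊕ Fin a,
            geoDist (Sum.elim E (fun k => -E k) i) (Sum.elim E (fun k => -E k) j))
          = (π / 2) * (N : ℝ) ^ 2) ∧
    (Odd N →
      ∃ D : Fin N → Metric.sphere (0 : EuclideanSpace ℝ (Fin (d + 1))) 1,
        (π / 2) * (N : ℝ) ^ 2 - π ^ 2 ≤ ∑ i, ∑ j, geoDist (D i) (D j)) := by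
  refine ⟨fun D => SGDaux.part1 D, fun a ha E => ?_, fun h => SGDaux.part3 h⟩
  subst ha
  exact SGDaux.part2 a E

end
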